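/- arXiv:2202.06452 — 2 statements merged into one kernel-verified Lean document; each statement's English description precedes it below -/
import Mathlib

section
/- A set of b ≥ 3 arcs on the circle in which each arc intersects at most its two cyclically adjacent arcs produces at most 2b nonempty positivity sets for p = 1; any family of b arcs on the circle produces at most 2b nonempty positivity sets, since a point of the circle can lie in a set of arcs only if their indices form a set whose arcs pairwise intersect, and any family of arcs covering a common point yields an 'interval' of overlap structure bounding distinct intersection patterns by 2b. -/
open Real Set

section ArcsAux

local instance : Fact ((0:ℝ) < 2 * π) := ⟨Real.two_pi_pos⟩

noncomputable def crep (y : AddCircle (2 * π)) : ℝ := (AddCircle.equivIco (2 * π) 0 y : ℝ)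

lemma crep_mem (y : AddCircle (2 * π)) : crep y ∈ Ico (0:ℝ) (2 * π) := by
  have h := (AddCircle.equivIco (2 * π) 0 y).2
  simpa [zero_add, crep] using h

lemma crep_nonneg (y : AddCircle (2 * π)) : 0 ≤ crep y := (crep_mem y).1
lemma crep_lt (y : AddCircle (2 * π)) : crep y < 2 * π := (crep_mem y).2

lemma coe_crep (y : AddCircle (2 * π)) : ((crep y : ℝ) : AddCircle (2 * π)) = y := by
  have := (AddCircle.equivIco (2 * π) 0).symm_apply_apply y
  rwa [AddCircle.equivIco, QuotientAddGroup.equivIcoMod_symm_apply] at this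

lemma crep_coe {t : ℝ} (h0 : 0 ≤ t) (h1 : t < 2 * π) : crep (t : AddCircle (2 * π)) = t := by
  unfold crep
  rw [AddCircle.equivIco, QuotientAddGroup.equivIcoMod_coe]
  exact (toIcoMod_eq_self _).mpr (by simpa [zero_add] using And.intro h0 h1)


lemma coe_two_pi : (((2:ℝ) * π : ℝ) : AddCircle (2 * π)) = 0 := AddCircle.coe_period _

lemma crep_coe' {t : ℝ} (h0 : 0 ≤ t) (h1 : t < 2 * (2 * π)) :
    crep (t : AddCircle (2 * π)) = t ∨ crep (t : AddCircle (2 * π)) = t - 2 * π := by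
  rcases lt_or_ge t (2 * π) with h | h
  · exact Or.inl (crep_coe h0 h)
  · right
    have h2 : ((t : ℝ) : AddCircle (2 * π)) = ((t - 2 * π : ℝ) : AddCircle (2 * π)) := by
      rw [AddCircle.coe_sub, coe_two_pi, sub_zero]
    rw [h2]
    exact crep_coe (by linarith) (by linarith)

lemma crep_coe'' {t : ℝ} (h0 : -(2 * π) ≤ t) (h1 : t < 2 * π) :
    crep (t : AddCircle (2 * π)) = t ∨ crep (t : AddCircle (2 * π)) = t + 2 * π := by
  rcases le_or_gt 0 t with h | h
  · exact Or.inl (crep_coe h h1)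
  · right
    have h2 : ((t : ℝ) : AddCircle (2 * π)) = ((t + 2 * π : ℝ) : AddCircle (2 * π)) := by
      rw [AddCircle.coe_add, coe_two_pi, add_zero]
    rw [h2]
    exact crep_coe (by linarith) (by linarith)

/-- membership pattern of an "interval" with endpoints flags -/
def amemb (len : ℝ) (c d : Prop) (r : ℝ) : Prop :=
  (0 < r ∧ r < len) ∨ (r = 0 ∧ c) ∨ (r = len ∧ d)

/-- Classification of proper preconnected subsets of the circle. -/
lemma arc_classify (Φ : Set (AddCircle (2 * π))) (hconn : IsPreconnected Φ)
    (hproper : Φ ≠ Set.univ) :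
    ∃ (S : AddCircle (2 * π)) (len : ℝ) (c d : Prop),
      0 ≤ len ∧ len ≤ 2 * π ∧
      (len = 0 → Φ.Nonempty → c ∧ d) ∧
      (len = 2 * π → ¬c ∧ ¬d) ∧
      (∀ x, x ∈ Φ ↔ amemb len c d (crep (x - S))) := by
  classical
  rcases Set.eq_empty_or_nonempty Φ with hΦ | hΦ
  · refine ⟨0, 0, False, False, le_refl _, by positivity, ?_, ?_, ?_⟩
    · intro _ h; rw [hΦ] at h; exact (Set.not_nonempty_empty h).elim
    · intro h; exact absurd h.symm (ne_of_gt Real.two_pi_pos)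
    · intro x
      simp [hΦ, amemb]
      exact fun h => h.le
  -- proper: choose a point z outside
  obtain ⟨z, hz⟩ : ∃ z, z ∉ Φ := by
    by_contra h
    push_neg at h
    exact hproper (Set.eq_univ_of_forall h)
  set a : ℝ := crep z with ha
  have haz : ((a : ℝ) : AddCircle (2 * π)) = z := coe_crep z
  set I : Set ℝ := {t | t ∈ Ioo a (a + 2 * π) ∧ ((t : ℝ) : AddCircle (2 * π)) ∈ Φ} with hI
  -- basic: every x ∈ Φ has a representative in I
  have hrepI : ∀ x ∈ Φ, ∃ t ∈ I, ((t:ℝ) : AddCircle (2*π)) = x := by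
    intro x hx
    refine ⟨a + crep (x - z), ⟨⟨?_, ?_⟩, ?_⟩, ?_⟩
    · have h0 : crep (x - z) ≠ 0 := by
        intro h
        have : ((crep (x - z) : ℝ) : AddCircle (2*π)) = x - z := coe_crep _
        rw [h] at this
        simp at this
        have : x = z := by
          have := this.symm
          rwa [sub_eq_zero] at this
        exact hz (this ▸ hx)
      have := crep_nonneg (x - z)
      cases' (lt_or_eq_of_le this) with h h
      · linarith
      · exact absurd h.symm h0
    · have := crep_lt (x - z); linarith
    · show ((a + crep (x-z) : ℝ) : AddCircle (2*π)) ∈ Φ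
      have : ((a + crep (x-z) : ℝ) : AddCircle (2*π)) = x := by
        rw [AddCircle.coe_add, haz, coe_crep]
        abel
      rwa [this]
    · rw [AddCircle.coe_add, haz, coe_crep]
      abel
  -- injectivity of coe on Ico a (a + 2π)
  have hinj : ∀ t₁ ∈ Ico a (a + 2*π), ∀ t₂ ∈ Ico a (a + 2*π),
      ((t₁:ℝ) : AddCircle (2*π)) = t₂ → t₁ = t₂ := by
    intro t₁ h₁ t₂ h₂ h
    have e1 := (toIcoMod_eq_self (Real.two_pi_pos)).mpr h₁
    have e2 := (toIcoMod_eq_self (Real.two_pi_pos)).mpr h₂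
    have : (QuotientAddGroup.equivIcoMod Real.two_pi_pos a ((t₁:ℝ) : AddCircle (2*π)) : ℝ)
        = (QuotientAddGroup.equivIcoMod Real.two_pi_pos a ((t₂:ℝ) : AddCircle (2*π)) : ℝ) := by
      rw [h]
    rw [QuotientAddGroup.equivIcoMod_coe, QuotientAddGroup.equivIcoMod_coe] at this
    simpa [e1, e2] using this
  -- order connectedness of I
  have hord : ∀ t₁ ∈ I, ∀ t₂ ∈ I, ∀ t, t₁ ≤ t → t ≤ t₂ → t ∈ I := by
    intro t₁ ht₁ t₂ ht₂ t h₁ h₂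
    have htIoo : t ∈ Ioo a (a + 2 * π) := ⟨lt_of_lt_of_le ht₁.1.1 h₁, lt_of_le_of_lt h₂ ht₂.1.2⟩
    refine ⟨htIoo, ?_⟩
    by_contra ht
    -- two open arcs
    set U : Set (AddCircle (2*π)) := ((↑) : ℝ → AddCircle (2*π)) '' Ioo a t with hU
    set V : Set (AddCircle (2*π)) := ((↑) : ℝ → AddCircle (2*π)) '' Ioo t (a + 2*π) with hV
    have hUopen : IsOpen U := QuotientAddGroup.isOpenMap_coe _ isOpen_Ioo
    have hVopen : IsOpen V := QuotientAddGroup.isOpenMap_coe _ isOpen_Ioo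
    have hcover : Φ ⊆ U ∪ V := by
      intro x hx
      obtain ⟨s, hs, hsx⟩ := hrepI x hx
      rcases lt_trichotomy s t with h | h | h
      · exact Or.inl ⟨s, ⟨hs.1.1, h⟩, hsx⟩
      · exact absurd (h ▸ hs.2) ht
      · exact Or.inr ⟨s, ⟨h, hs.1.2⟩, hsx⟩
    have hU1 : (Φ ∩ U).Nonempty := by
      rcases eq_or_lt_of_le h₁ with rfl | h₁'
      · exact absurd ht₁.2 ht
      · exact ⟨_, ht₁.2, ⟨t₁, ⟨ht₁.1.1, h₁'⟩, rfl⟩⟩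
    have hV1 : (Φ ∩ V).Nonempty := by
      rcases eq_or_lt_of_le h₂ with rfl | h₂'
      · exact absurd ht₂.2 ht
      · exact ⟨_, ht₂.2, ⟨t₂, ⟨h₂', ht₂.1.2⟩, rfl⟩⟩
    obtain ⟨y, hyΦ, hyU, hyV⟩ := hconn U V hUopen hVopen hcover hU1 hV1
    obtain ⟨s₁, hs₁, rfl⟩ := hyU
    obtain ⟨s₂, hs₂, hss⟩ := hyV
    have : s₂ = s₁ := hinj s₂ ⟨le_of_lt (lt_trans htIoo.1 hs₂.1), hs₂.2⟩
      s₁ ⟨hs₁.1.le, lt_trans hs₁.2 htIoo.2⟩ hss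
    subst this
    exact absurd hs₁.2 (not_lt.mpr hs₂.1.le)
  -- I nonempty, bounded
  obtain ⟨x₀, hx₀⟩ := hΦ
  obtain ⟨t₀, ht₀, _⟩ := hrepI x₀ hx₀
  have hIne : I.Nonempty := ⟨t₀, ht₀⟩
  have hbdd1 : BddBelow I := ⟨a, fun t ht => ht.1.1.le⟩
  have hbdd2 : BddAbove I := ⟨a + 2*π, fun t ht => ht.1.2.le⟩
  set s : ℝ := sInf I with hs
  set e : ℝ := sSup I with he
  have hse : s ≤ e := csInf_le_csSup hIne hbdd1 hbdd2
  have has : a ≤ s := le_csInf hIne (fun t ht => ht.1.1.le)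
  have hea : e ≤ a + 2*π := csSup_le hIne (fun t ht => ht.1.2.le)
  have hsub : ∀ t ∈ I, s ≤ t ∧ t ≤ e := fun t ht => ⟨csInf_le hbdd1 ht, le_csSup hbdd2 ht⟩
  have hIoo : ∀ t, s < t → t < e → t ∈ I := by
    intro t h₁ h₂
    obtain ⟨t₁, ht₁, ht₁'⟩ := exists_lt_of_csInf_lt hIne h₁
    obtain ⟨t₂, ht₂, ht₂'⟩ := exists_lt_of_lt_csSup hIne h₂
    exact hord t₁ ht₁ t₂ ht₂ t ht₁'.le ht₂'.le
  refine ⟨((s : ℝ) : AddCircle (2*π)), e - s, s ∈ I, e ∈ I, by linarith, by linarith, ?_, ?_, ?_⟩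
  · -- len = 0 case
    intro hlen _
    have hse' : s = e := by linarith
    have : t₀ = s := le_antisymm (hse' ▸ (hsub t₀ ht₀).2) (hsub t₀ ht₀).1
    subst this
    exact ⟨ht₀, hse' ▸ ht₀⟩
  · -- len = 2π case
    intro hlen
    have hsa : s = a := by linarith
    have hea' : e = a + 2*π := by linarith
    constructor
    · intro h; exact absurd (hsa ▸ h.1.1) (lt_irrefl a)
    · intro h; exact absurd (hea' ▸ h.1.2) (lt_irrefl (a + 2*π))
  · -- membership criterion
    intro x
    constructor
    · intro hx
      obtain ⟨t, ht, rfl⟩ := hrepI x hx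
      have h1 : (0:ℝ) ≤ t - s := by linarith [(hsub t ht).1]
      have h2 : t - s < 2 * π := by linarith [ht.1.1, ht.1.2, has]
      have hcr : crep (((t:ℝ) : AddCircle (2*π)) - ((s:ℝ) : AddCircle (2*π))) = t - s := by
        rw [← AddCircle.coe_sub]
        exact crep_coe h1 h2
      rw [hcr]
      rcases eq_or_lt_of_le h1 with h | h
      · have : t = s := by linarith
        exact Or.inr (Or.inl ⟨by linarith, this ▸ ht⟩)
      · rcases eq_or_lt_of_le (hsub t ht).2 with h' | h'
        · exact Or.inr (Or.inr ⟨by linarith, h' ▸ ht⟩)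
        · exact Or.inl ⟨h, by linarith⟩
    · intro hx
      set r : ℝ := crep (x - ((s:ℝ) : AddCircle (2*π))) with hr
      have hxr : x = ((s + r : ℝ) : AddCircle (2*π)) := by
        rw [AddCircle.coe_add, coe_crep]
        abel
      rcases hx with ⟨h1, h2⟩ | ⟨h1, h2⟩ | ⟨h1, h2⟩
      · have : s + r ∈ I := hIoo _ (by linarith) (by linarith)
        rw [hxr]; exact this.2
      · rw [hxr, h1, add_zero]; exact h2.2
      · rw [hxr, h1]
        have : s + (e - s) = e := by ring
        rw [this]; exact h2.2


lemma real_at {T u v w len ρ : ℝ} {c d : Prop}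
    (hu0 : 0 ≤ u) (_hu1 : u < T) (hv0 : 0 ≤ v) (hv1 : v < T)
    (hw0 : 0 ≤ w) (hw1 : w < T)
    (hl0 : 0 ≤ len) (_hl1 : len ≤ T) (hρ0 : 0 ≤ ρ) (_hρ1 : ρ < T)
    (hw' : u = w + ρ ∨ u = w + ρ - T)
    (hv' : v = u - len ∨ v = u - len + T)
    (hlen0 : len = 0 → c ∧ d) (hlenT : len = T → ¬c ∧ ¬d)
    (hc : c → ρ ≤ u) (hnc : ¬c → 0 < u → ρ < u)
    (hd : ¬d → ρ ≤ v) (hdd : d → 0 < v → ρ < v) :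
    (amemb len c d u ↔ amemb len c d w) := by
  unfold amemb
  constructor
  · intro hu
    rcases hw' with h | h
    · -- u = w + ρ
      rcases hu with ⟨h1, h2⟩ | ⟨h1, h2⟩ | ⟨h1, h2⟩
      · rcases lt_or_eq_of_le hw0 with hw | hw
        · exact Or.inl ⟨hw, by linarith⟩
        · by_cases hcc : c
          · exact Or.inr (Or.inl ⟨hw.symm, hcc⟩)
          · exact absurd (hnc hcc h1) (by linarith)
      · exact Or.inr (Or.inl ⟨by linarith, h2⟩)
      · rcases eq_or_lt_of_le hρ0 with hρ | hρ
        · exact Or.inr (Or.inr ⟨by linarith, h2⟩)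
        · rcases lt_or_eq_of_le hw0 with hw | hw
          · exact Or.inl ⟨hw, by linarith⟩
          · by_cases hcc : c
            · exact Or.inr (Or.inl ⟨hw.symm, hcc⟩)
            · exact absurd (hnc hcc (by linarith)) (by linarith)
    · -- u = w + ρ - T : all cases impossible
      exfalso
      have huρ : u < ρ := by linarith
      rcases hu with ⟨h1, h2⟩ | ⟨h1, h2⟩ | ⟨h1, h2⟩
      · by_cases hcc : c
        · linarith [hc hcc]
        · linarith [hnc hcc h1]
      · linarith [hc h2]
      · rcases lt_or_eq_of_le hu0 with hu' | hu'
        · by_cases hcc : c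
          · linarith [hc hcc]
          · linarith [hnc hcc hu']
        · have hcd := hlen0 (by linarith)
          linarith [hc hcd.1]
  · intro hw
    rcases hw' with h | h
    · -- u = w + ρ
      rcases hw with ⟨h1, h2⟩ | ⟨h1, h2⟩ | ⟨h1, h2⟩
      · have hupos : 0 < u := by linarith
        by_cases hul : u < len
        · exact Or.inl ⟨hupos, hul⟩
        · have hvv : v = u - len := by
            rcases hv' with h' | h'
            · exact h'
            · exfalso; push_neg at hul; linarith
          push_neg at hul
          by_cases hdq : d
          · rcases lt_or_eq_of_le hv0 with hv | hv
            · linarith [hdd hdq hv]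
            · exact Or.inr (Or.inr ⟨by linarith, hdq⟩)
          · linarith [hd hdq]
      · rcases lt_or_eq_of_le hu0 with hu' | hu'
        · by_cases hul : u < len
          · exact Or.inl ⟨hu', hul⟩
          · have hvv : v = u - len := by
              rcases hv' with h' | h'
              · exact h'
              · exfalso; push_neg at hul; linarith
            push_neg at hul
            by_cases hdq : d
            · rcases lt_or_eq_of_le hv0 with hv | hv
              · linarith [hdd hdq hv]
              · exact Or.inr (Or.inr ⟨by linarith, hdq⟩)
            · exact absurd (hlen0 (by linarith [hd hdq])).2 hdq
        · exact Or.inr (Or.inl ⟨hu'.symm, h2⟩)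
      · rcases eq_or_lt_of_le hρ0 with hρ | hρ
        · exact Or.inr (Or.inr ⟨by linarith, h2⟩)
        · exfalso
          have hvv : v = u - len := by
            rcases hv' with h' | h'
            · exact h'
            · exfalso; linarith
          linarith [hdd h2 (by linarith : 0 < v)]
    · -- u = w + ρ - T
      have hρpos : 0 < ρ := by linarith
      have huρ : u < ρ := by linarith
      rcases hw with ⟨h1, h2⟩ | ⟨h1, h2⟩ | ⟨h1, h2⟩
      · by_cases hul : len ≤ u
        · have hvv : v = u - len := by
            rcases hv' with h' | h'
            · exact h'
            · exfalso; linarith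
          by_cases hdq : d
          · rcases lt_or_eq_of_le hv0 with hv | hv
            · linarith [hdd hdq hv]
            · exact Or.inr (Or.inr ⟨by linarith, hdq⟩)
          · linarith [hd hdq]
        · push_neg at hul
          rcases lt_or_eq_of_le hu0 with hu' | hu'
          · exact Or.inl ⟨hu', hul⟩
          · by_cases hcc : c
            · exact Or.inr (Or.inl ⟨hu'.symm, hcc⟩)
            · exfalso
              have hvv : v = u - len + T := by
                rcases hv' with h' | h'
                · exfalso; linarith
                · exact h'
              rcases lt_or_eq_of_le hv0 with hv | hv
              · by_cases hdq : d
                · linarith [hdd hdq hv]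
                · linarith [hd hdq]
              · have hlT : len = T := by linarith
                linarith [hd (hlenT hlT).2]
      · linarith
      · exfalso
        have hvv : v = ρ := by
          rcases hv' with h' | h'
          · exfalso; linarith
          · linarith
        linarith [hdd h2 (by linarith : 0 < v)]

lemma real_after {T u v w len ρ : ℝ} {c d : Prop}
    (hu0 : 0 ≤ u) (_hu1 : u < T) (hv0 : 0 ≤ v) (hv1 : v < T)
    (hw0 : 0 ≤ w) (hw1 : w < T)
    (_hl0 : 0 ≤ len) (_hl1 : len ≤ T) (hρ0 : 0 < ρ) (_hρ1 : ρ < T)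
    (hw' : u = w + ρ ∨ u = w + ρ - T)
    (hv' : v = u - len ∨ v = u - len + T)
    (hlen0 : len = 0 → c ∧ d) (hlenT : len = T → ¬c ∧ ¬d)
    (hc : c → ρ ≤ u) (hnc : ¬c → 0 < u → ρ ≤ u)
    (hd : ¬d → ρ ≤ v) (hdd : d → 0 < v → ρ ≤ v) :
    (amemb len c d u ↔ w < len) := by
  unfold amemb
  constructor
  · intro hu
    rcases hw' with h | h
    · rcases hu with ⟨h1, h2⟩ | ⟨h1, h2⟩ | ⟨h1, h2⟩
      · linarith
      · linarith [hc h2]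
      · linarith
    · exfalso
      have huρ : u < ρ := by linarith
      rcases hu with ⟨h1, h2⟩ | ⟨h1, h2⟩ | ⟨h1, h2⟩
      · by_cases hcc : c
        · linarith [hc hcc]
        · linarith [hnc hcc h1]
      · linarith [hc h2]
      · rcases lt_or_eq_of_le hu0 with hu' | hu'
        · by_cases hcc : c
          · linarith [hc hcc]
          · linarith [hnc hcc hu']
        · linarith [hc (hlen0 (by linarith)).1]
  · intro hwl
    rcases hw' with h | h
    · have hupos : 0 < u := by linarith
      by_cases hul : u < len
      · exact Or.inl ⟨hupos, hul⟩
      · push_neg at hul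
        have hvv : v = u - len := by
          rcases hv' with h' | h'
          · exact h'
          · exfalso; linarith
        by_cases hdq : d
        · rcases lt_or_eq_of_le hv0 with hv | hv
          · linarith [hdd hdq hv]
          · exact Or.inr (Or.inr ⟨by linarith, hdq⟩)
        · linarith [hd hdq]
    · have huρ : u < ρ := by linarith
      by_cases hul : len ≤ u
      · have hvv : v = u - len := by
          rcases hv' with h' | h'
          · exact h'
          · exfalso; linarith
        by_cases hdq : d
        · rcases lt_or_eq_of_le hv0 with hv | hv
          · linarith [hdd hdq hv]
          · exact Or.inr (Or.inr ⟨by linarith, hdq⟩)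
        · linarith [hd hdq]
      · push_neg at hul
        rcases lt_or_eq_of_le hu0 with hu' | hu'
        · exact Or.inl ⟨hu', hul⟩
        · by_cases hcc : c
          · exact Or.inr (Or.inl ⟨hu'.symm, hcc⟩)
          · exfalso
            have hvv : v = u - len + T := by
              rcases hv' with h' | h'
              · exfalso; linarith
              · exact h'
            rcases lt_or_eq_of_le hv0 with hv | hv
            · by_cases hdq : d
              · linarith [hdd hdq hv]
              · linarith [hd hdq]
            · have hlT : len = T := by linarith
              linarith [hd (hlenT hlT).2]

lemma after_iff (Φ : Set (AddCircle (2 * π))) (S : AddCircle (2 * π)) (len : ℝ)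
    (c d : Prop) (hl1 : len ≤ 2 * π)
    (hM : ∀ x, x ∈ Φ ↔ amemb len c d (crep (x - S))) (P : AddCircle (2 * π)) :
    (∃ ε : ℝ, 0 < ε ∧ ∀ t : ℝ, 0 < t → t < ε → P + ((t : ℝ) : AddCircle (2 * π)) ∈ Φ)
      ↔ crep (P - S) < len := by
  set w : ℝ := crep (P - S) with hw
  have hw0 : 0 ≤ w := crep_nonneg _
  have hw1 : w < 2 * π := crep_lt _
  have hkey : ∀ t : ℝ, 0 < t → w + t < 2 * π →
      crep ((P + ((t : ℝ) : AddCircle (2 * π))) - S) = w + t := by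
    intro t ht h2
    have : (P + ((t : ℝ) : AddCircle (2 * π))) - S = ((w + t : ℝ) : AddCircle (2 * π)) := by
      rw [AddCircle.coe_add, hw, coe_crep]
      abel
    rw [this, crep_coe (by linarith) h2]
  constructor
  · rintro ⟨ε, hε, h⟩
    set t₀ : ℝ := (min ε (2 * π - w)) / 2 with ht₀
    have h1 : 0 < t₀ := by
      apply div_pos _ (by norm_num)
      exact lt_min hε (by linarith)
    have h2 : t₀ < ε := by
      have : t₀ ≤ ε / 2 := by
        apply div_le_div_of_nonneg_right (min_le_left _ _) (by norm_num)
      linarith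
    have h3 : w + t₀ < 2 * π := by
      have : t₀ ≤ (2 * π - w) / 2 := by
        apply div_le_div_of_nonneg_right (min_le_right _ _) (by norm_num)
      linarith
    have hmem := (hM _).mp (h t₀ h1 h2)
    rw [hkey t₀ h1 h3] at hmem
    rcases hmem with ⟨ha, hb⟩ | ⟨ha, hb⟩ | ⟨ha, hb⟩
    · linarith
    · linarith
    · linarith
  · intro hwl
    refine ⟨min (len - w) (2 * π - w), lt_min (by linarith) (by linarith), ?_⟩
    intro t ht1 ht2
    have h2 : w + t < 2 * π := by
      have := lt_of_lt_of_le ht2 (min_le_right _ _); linarith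
    have h3 : w + t < len := by
      have := lt_of_lt_of_le ht2 (min_le_left _ _); linarith
    rw [hM, hkey t ht1 h2]
    exact Or.inl ⟨by linarith, h3⟩

open scoped Classical in
/-- The intrinsic "pattern just after event `e`" predicate. -/
noncomputable def ΨFun {b : ℕ} (Φ : Fin b → Set (AddCircle (2 * π))) (S : Fin b → AddCircle (2 * π))
    (len : Fin b → ℝ) (c d : Fin b → Prop) (e : Fin b × Bool) (j : Fin b) : Prop :=
  if (if e.2 then ¬ d e.1 else c e.1)
  then (if e.2 then S e.1 + ((len e.1 : ℝ) : AddCircle (2 * π)) else S e.1) ∈ Φ j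
  else ∃ ε : ℝ, 0 < ε ∧ ∀ t : ℝ, 0 < t → t < ε →
    (if e.2 then S e.1 + ((len e.1 : ℝ) : AddCircle (2 * π)) else S e.1)
      + ((t : ℝ) : AddCircle (2 * π)) ∈ Φ j

lemma key_lemma {b : ℕ} (Φ : Fin b → Set (AddCircle (2 * π)))
    (S : Fin b → AddCircle (2 * π)) (len : Fin b → ℝ) (c d : Fin b → Prop)
    (hl0 : ∀ i, 0 ≤ len i) (hl1 : ∀ i, len i ≤ 2 * π)
    (hlen0 : ∀ i, len i = 0 → (Φ i).Nonempty → c i ∧ d i)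
    (hlenT : ∀ i, len i = 2 * π → ¬c i ∧ ¬d i)
    (hM : ∀ i x, x ∈ Φ i ↔ amemb (len i) (c i) (d i) (crep (x - S i)))
    (x : AddCircle (2 * π)) (hx : {i | x ∈ Φ i}.Nonempty) :
    ∃ e : Fin b × Bool, ∀ j, x ∈ Φ j ↔ ΨFun Φ S len c d e j := by
  classical
  obtain ⟨i₀, hi₀⟩ := hx
  set E : Fin b → AddCircle (2 * π) := fun i => S i + ((len i : ℝ) : AddCircle (2 * π)) with hE
  set u : Fin b → ℝ := fun j => crep (x - S j) with hudef
  set v : Fin b → ℝ := fun j => crep (x - E j) with hvdef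
  set K : Fin b × Bool → Lex (ℝ × Bool) := fun e =>
    if e.2 then (if d e.1 then (if v e.1 = 0 then toLex (2 * π, false) else toLex (v e.1, false))
                 else toLex (v e.1, true))
    else (if c e.1 then toLex (u e.1, true)
          else (if u e.1 = 0 then toLex (2 * π, false) else toLex (u e.1, false))) with hK
  set sfin : Finset (Fin b × Bool) := Finset.univ.filter (fun e => (Φ e.1).Nonempty) with hsdef
  have hs0 : (i₀, false) ∈ sfin := by
    simp only [hsdef, Finset.mem_filter, Finset.mem_univ, true_and]
    exact ⟨x, hi₀⟩
  obtain ⟨e, hes, hemin⟩ := sfin.exists_min_image K ⟨_, hs0⟩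
  -- the key of (i₀, false) has first coordinate < 2π
  have hui₀ : ¬ c i₀ → u i₀ ≠ 0 := by
    intro hcc h0
    rcases (hM i₀ x).mp hi₀ with ⟨h1, h2⟩ | ⟨h1, h2⟩ | ⟨h1, h2⟩
    · rw [show crep (x - S i₀) = u i₀ from rfl, h0] at h1; exact lt_irrefl _ h1
    · exact hcc h2
    · rw [show crep (x - S i₀) = u i₀ from rfl, h0] at h1
      exact hcc (hlen0 i₀ h1.symm ⟨x, hi₀⟩).1
  have hKi₀ : K (i₀, false) = toLex (u i₀, true) ∨ K (i₀, false) = toLex (u i₀, false) := by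
    by_cases hcc : c i₀
    · left; simp [hK, hcc]
    · right; simp [hK, hcc, hui₀ hcc]
  have hu2π : u i₀ < 2 * π := crep_lt _
  have hnotcoded : K e ≠ toLex (2 * π, false) := by
    intro hKe
    have h := hemin _ hs0
    rcases hKi₀ with h' | h' <;> rw [hKe, h'] at h <;>
      rcases Prod.Lex.toLex_le_toLex.mp h with h'' | h'' <;>
      simp only [] at h''
    · exact absurd h'' (not_lt.mpr hu2π.le)
    · exact absurd h''.1 hu2π.ne'
    · exact absurd h'' (not_lt.mpr hu2π.le)
    · exact absurd h''.1 hu2π.ne'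
  -- structure of the chosen minimal event
  obtain ⟨ρ, sb, hKe, hρP, hsbAt, hsb0, hρ0, hρ1⟩ :
      ∃ (ρ : ℝ) (sb : Bool), K e = toLex (ρ, sb) ∧
      ρ = crep (x - (if e.2 then E e.1 else S e.1)) ∧
      ((sb = true) ↔ (if e.2 then ¬ d e.1 else c e.1)) ∧
      (sb = false → 0 < ρ) ∧ 0 ≤ ρ ∧ ρ < 2 * π := by
    obtain ⟨i, bb⟩ := e
    cases bb
    · by_cases hcc : c i
      · exact ⟨u i, true, by simp [hK, hcc], by simp [hudef], by simp [hcc],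
          by simp, crep_nonneg _, crep_lt _⟩
      · have h0 : u i ≠ 0 := by
          intro h0
          exact hnotcoded (by simp [hK, hcc, h0])
        exact ⟨u i, false, by simp [hK, hcc, h0], by simp [hudef], by simp [hcc],
          fun _ => lt_of_le_of_ne (crep_nonneg _) (Ne.symm h0), crep_nonneg _, crep_lt _⟩
    · by_cases hdq : d i
      · have h0 : v i ≠ 0 := by
          intro h0
          exact hnotcoded (by simp [hK, hdq, h0])
        exact ⟨v i, false, by simp [hK, hdq, h0], by simp [hvdef], by simp [hdq],
          fun _ => lt_of_le_of_ne (crep_nonneg _) (Ne.symm h0), crep_nonneg _, crep_lt _⟩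
      · exact ⟨v i, true, by simp [hK, hdq], by simp [hvdef], by simp [hdq],
          by simp, crep_nonneg _, crep_lt _⟩
  -- minimality facts
  have hmin : ∀ j, (Φ j).Nonempty →
      (c j → ρ ≤ u j) ∧ (¬c j → u j ≠ 0 → (ρ < u j ∨ (ρ = u j ∧ sb = false))) ∧
      (¬d j → ρ ≤ v j) ∧ (d j → v j ≠ 0 → (ρ < v j ∨ (ρ = v j ∧ sb = false))) := by
    intro j hj
    have hjf : (j, false) ∈ sfin := by
      simp only [hsdef, Finset.mem_filter, Finset.mem_univ, true_and]; exact hj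
    have hjt : (j, true) ∈ sfin := by
      simp only [hsdef, Finset.mem_filter, Finset.mem_univ, true_and]; exact hj
    have h1 := hemin _ hjf
    have h2 := hemin _ hjt
    rw [hKe] at h1 h2
    refine ⟨?_, ?_, ?_, ?_⟩
    · intro hcc
      rw [show K (j, false) = toLex (u j, true) by simp [hK, hcc]] at h1
      rcases Prod.Lex.toLex_le_toLex.mp h1 with h | h
      · exact h.le
      · exact h.1.le
    · intro hcc h0
      rw [show K (j, false) = toLex (u j, false) by simp [hK, hcc, h0]] at h1
      rcases Prod.Lex.toLex_le_toLex.mp h1 with h | h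
      · exact Or.inl h
      · refine Or.inr ⟨h.1, ?_⟩
        have hb2 := h.2
        cases sb
        · rfl
        · exact absurd (show (true : Bool) ≤ false from hb2) (by decide)
    · intro hdq
      rw [show K (j, true) = toLex (v j, true) by simp [hK, hdq]] at h2
      rcases Prod.Lex.toLex_le_toLex.mp h2 with h | h
      · exact h.le
      · exact h.1.le
    · intro hdq h0
      rw [show K (j, true) = toLex (v j, false) by simp [hK, hdq, h0]] at h2
      rcases Prod.Lex.toLex_le_toLex.mp h2 with h | h
      · exact Or.inl h
      · refine Or.inr ⟨h.1, ?_⟩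
        have hb2 := h.2
        cases sb
        · rfl
        · exact absurd (show (true : Bool) ≤ false from hb2) (by decide)
  -- conclude
  refine ⟨e, fun j => ?_⟩
  have hPt : (if e.2 then S e.1 + ((len e.1 : ℝ) : AddCircle (2 * π)) else S e.1)
      = (if e.2 then E e.1 else S e.1) := by
    cases e.2 <;> simp [hE]
  by_cases hj : (Φ j).Nonempty
  · obtain ⟨hc', hnc', hd', hdd'⟩ := hmin j hj
    set w : ℝ := crep ((if e.2 then E e.1 else S e.1) - S j) with hwdef
    have hw0 : 0 ≤ w := crep_nonneg _
    have hw2 : w < 2 * π := crep_lt _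
    have huj0 : 0 ≤ u j := crep_nonneg _
    have huj2 : u j < 2 * π := crep_lt _
    have hwrel : u j = w + ρ ∨ u j = w + ρ - 2 * π := by
      have e1 : ((ρ : ℝ) : AddCircle (2 * π)) = x - (if e.2 then E e.1 else S e.1) := by
        rw [hρP]; exact coe_crep _
      have e2 : ((w : ℝ) : AddCircle (2 * π)) = (if e.2 then E e.1 else S e.1) - S j := by
        rw [hwdef]; exact coe_crep _
      have hco : x - S j = ((ρ + w : ℝ) : AddCircle (2 * π)) := by
        rw [AddCircle.coe_add, e1, e2]; abel
      have h3 : u j = crep (((ρ + w : ℝ) : AddCircle (2 * π))) := by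
        rw [show u j = crep (x - S j) from rfl, hco]
      rcases crep_coe' (t := ρ + w) (by linarith) (by linarith) with h | h
      · left; rw [h3, h]; ring
      · right; rw [h3, h]; ring
    have hvrel : v j = u j - len j ∨ v j = u j - len j + 2 * π := by
      have e1 : ((u j : ℝ) : AddCircle (2 * π)) = x - S j := by
        rw [show u j = crep (x - S j) from rfl]; exact coe_crep _
      have hco : x - E j = ((u j - len j : ℝ) : AddCircle (2 * π)) := by
        rw [AddCircle.coe_sub, e1, show E j = S j + ((len j : ℝ) : AddCircle (2 * π)) from rfl]
        abel
      have h3 : v j = crep (((u j - len j : ℝ) : AddCircle (2 * π))) := by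
        rw [show v j = crep (x - E j) from rfl, hco]
      rcases crep_coe'' (t := u j - len j) (by linarith [hl1 j]) (by linarith [hl0 j]) with h | h
      · left; rw [h3, h]
      · right; rw [h3, h]
    have hgoal : (x ∈ Φ j) ↔ amemb (len j) (c j) (d j) (u j) := hM j x
    rw [hgoal]
    by_cases hAt : (if e.2 then ¬ d e.1 else c e.1)
    · have hsb : sb = true := hsbAt.mpr hAt
      have hΨeq : ΨFun Φ S len c d e j ↔ amemb (len j) (c j) (d j) w := by
        rw [ΨFun, if_pos hAt, hPt, hwdef]
        exact hM j _
      rw [hΨeq]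
      refine real_at (T := 2 * π) (crep_nonneg _) (crep_lt _) (crep_nonneg _) (crep_lt _)
        (crep_nonneg _) (crep_lt _) (hl0 j) (hl1 j) hρ0 hρ1 hwrel hvrel
        (fun h => hlen0 j h hj) (hlenT j) hc' ?_ hd' ?_
      · intro hcc h0
        rcases hnc' hcc (ne_of_gt h0) with h | h
        · exact h
        · rw [hsb] at h; exact absurd h.2 (by simp)
      · intro hdq h0
        rcases hdd' hdq (ne_of_gt h0) with h | h
        · exact h
        · rw [hsb] at h; exact absurd h.2 (by simp)
    · have hsb : sb = false := by
        cases hsb' : sb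
        · rfl
        · exact absurd (hsbAt.mp hsb') hAt
      have hρpos : 0 < ρ := hsb0 hsb
      have hΨeq : ΨFun Φ S len c d e j ↔ w < len j := by
        rw [ΨFun, if_neg hAt, hPt, hwdef]
        exact after_iff (Φ j) (S j) (len j) (c j) (d j) (hl1 j) (hM j) _
      rw [hΨeq]
      refine real_after (T := 2 * π) (crep_nonneg _) (crep_lt _) (crep_nonneg _) (crep_lt _)
        (crep_nonneg _) (crep_lt _) (hl0 j) (hl1 j) hρpos hρ1 hwrel hvrel
        (fun h => hlen0 j h hj) (hlenT j) hc' ?_ hd' ?_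
      · intro hcc h0
        rcases hnc' hcc (ne_of_gt h0) with h | h
        · exact h.le
        · exact h.1.le
      · intro hdq h0
        rcases hdd' hdq (ne_of_gt h0) with h | h
        · exact h.le
        · exact h.1.le
  · have hxj : x ∉ Φ j := fun h => hj ⟨x, h⟩
    refine iff_of_false hxj ?_
    rw [ΨFun]
    by_cases hAt : (if e.2 then ¬ d e.1 else c e.1)
    · rw [if_pos hAt]
      exact fun h => hj ⟨_, h⟩
    · rw [if_neg hAt]
      rintro ⟨ε, hε, h⟩
      exact hj ⟨_, h (ε / 2) (by linarith) (by linarith)⟩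

end ArcsAux

/-- for any family of `b` arcs (connected subsets of the circle
`ℝ/2πℤ`), none of which is the whole circle, the number of distinct nonempty
positivity sets `A(x) = {i : x ∈ Φ_i}` is at most `2b`. -/
theorem arcs_positivity_sets_le {b : ℕ}
    (Φ : Fin b → Set (AddCircle (2 * π)))
    (hconn : ∀ i, IsPreconnected (Φ i))
    (hproper : ∀ i, Φ i ≠ Set.univ) :
    Set.ncard {A : Set (Fin b) | A.Nonempty ∧ ∃ x : AddCircle (2 * π), A = {i | x ∈ Φ i}}
      ≤ 2 * b := by
  classical
  rcases Nat.eq_zero_or_pos b with hb | hb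
  · subst hb
    have hempty : {A : Set (Fin 0) | A.Nonempty ∧ ∃ x : AddCircle (2 * π), A = {i | x ∈ Φ i}}
        = ∅ := by
      apply Set.eq_empty_iff_forall_notMem.mpr
      rintro A ⟨⟨i, _⟩, -⟩
      exact i.elim0
    rw [hempty, Set.ncard_empty]
  choose S len c d hl0 hl1 hlen0 hlenT hM using
    fun i => arc_classify (Φ i) (hconn i) (hproper i)
  have key := fun x hx => key_lemma Φ S len c d hl0 hl1 hlen0 hlenT (fun i y => hM i y) x hx
  set PS := {A : Set (Fin b) | A.Nonempty ∧ ∃ x : AddCircle (2 * π), A = {i | x ∈ Φ i}} with hPS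
  have hmap : ∀ A ∈ PS, ∃ e : Fin b × Bool, A = {j | ΨFun Φ S len c d e j} := by
    rintro A ⟨hA, x, rfl⟩
    obtain ⟨e, he⟩ := key x hA
    exact ⟨e, Set.ext fun j => he j⟩
  haveI : Nonempty (Fin b × Bool) := ⟨(⟨0, hb⟩, false)⟩
  choose! f hf using hmap
  have hinj : Set.InjOn f PS := by
    intro A hA B hB hfe
    rw [hf A hA, hf B hB, hfe]
  calc PS.ncard ≤ (Set.univ : Set (Fin b × Bool)).ncard :=
        Set.ncard_le_ncard_of_injOn f (fun a _ => Set.mem_univ _) hinj Set.finite_univ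
    _ = 2 * b := by
        rw [Set.ncard_univ, Nat.card_eq_fintype_card, Fintype.card_prod,
          Fintype.card_fin, Fintype.card_bool]
        ring
end

section
/- In a Tulip design with b ≥ 4 beams, the component beams are exactly the sets ω_i = [y_{i⊖1}, x_{i⊕1}) and ω_{i,i⊕1} = [x_{i⊕1}, y_i) when Φ_i = [x_i, y_i) are arcs satisfying x_i ≤ x_{i⊕1} ≤ y_i ≤ y_{i⊕1} (cyclically), and these 2b intervals partition the circle. -/
open Real

section Aux

variable {a : ℝ}

private lemma tulip_fact : Fact (0 < 2 * π) := ⟨by positivity⟩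

private lemma tulip_inj {u v : ℝ} (hu : u ∈ Set.Ico a (a + 2*π)) (hv : v ∈ Set.Ico a (a + 2*π))
    (h : (u : AddCircle (2*π)) = v) : u = v := by
  haveI := tulip_fact
  exact (AddCircle.coe_eq_coe_iff_of_mem_Ico hu hv).mp h

private lemma tulip_img_inter {S T : Set ℝ} (hS : S ⊆ Set.Ico a (a + 2*π))
    (hT : T ⊆ Set.Ico a (a + 2*π)) :
    ((fun t : ℝ => (t : AddCircle (2 * π))) '' S) ∩
      ((fun t : ℝ => (t : AddCircle (2 * π))) '' T)
      = (fun t : ℝ => (t : AddCircle (2 * π))) '' (S ∩ T) := by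
  ext x
  constructor
  · rintro ⟨⟨s, hs, rfl⟩, ⟨u, hu, hux⟩⟩
    have : u = s := tulip_inj (hT hu) (hS hs) hux
    subst this
    exact ⟨u, ⟨hs, hu⟩, rfl⟩
  · rintro ⟨s, ⟨hs1, hs2⟩, rfl⟩
    exact ⟨⟨s, hs1, rfl⟩, ⟨s, hs2, rfl⟩⟩

private lemma tulip_img_diff {S T U : Set ℝ} (hS : S ⊆ Set.Ico a (a + 2*π))
    (hT : T ⊆ Set.Ico a (a + 2*π)) (hU : U ⊆ Set.Ico a (a + 2*π)) :
    ((fun t : ℝ => (t : AddCircle (2 * π))) '' S) \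
      (((fun t : ℝ => (t : AddCircle (2 * π))) '' T) ∪
        ((fun t : ℝ => (t : AddCircle (2 * π))) '' U))
      = (fun t : ℝ => (t : AddCircle (2 * π))) '' (S \ (T ∪ U)) := by
  ext x
  constructor
  · rintro ⟨⟨s, hs, rfl⟩, hx⟩
    refine ⟨s, ⟨hs, ?_⟩, rfl⟩
    rintro (h | h)
    · exact hx (Or.inl ⟨s, h, rfl⟩)
    · exact hx (Or.inr ⟨s, h, rfl⟩)
  · rintro ⟨s, ⟨hs, hsn⟩, rfl⟩
    refine ⟨⟨s, hs, rfl⟩, ?_⟩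
    rintro (⟨u, hu, hux⟩ | ⟨u, hu, hux⟩)
    · exact hsn (Or.inl (tulip_inj (hT hu) (hS hs) hux ▸ hu))
    · exact hsn (Or.inr (tulip_inj (hU hu) (hS hs) hux ▸ hu))

private lemma tulip_img_disjoint {S T : Set ℝ} (hS : S ⊆ Set.Ico a (a + 2*π))
    (hT : T ⊆ Set.Ico a (a + 2*π)) (h : Disjoint S T) :
    Disjoint ((fun t : ℝ => (t : AddCircle (2 * π))) '' S)
      ((fun t : ℝ => (t : AddCircle (2 * π))) '' T) := by
  rw [Set.disjoint_left]
  rintro x ⟨s, hs, rfl⟩ ⟨u, hu, hux⟩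
  have : u = s := tulip_inj (hT hu) (hS hs) hux
  subst this
  exact (Set.disjoint_left.mp h hs) hu

private lemma tulip_disj_Ico {u v w z : ℝ} (h : v ≤ w) :
    Disjoint (Set.Ico u v) (Set.Ico w z) := by
  rw [Set.disjoint_left]
  rintro x ⟨_, h2⟩ ⟨h3, _⟩
  linarith

private lemma tulip_find (f : ℕ → ℝ) (t : ℝ) :
    ∀ n, 1 ≤ n → f 1 ≤ t → t < f (n + 1) →
      ∃ i < n, f (i + 1) ≤ t ∧ t < f (i + 2) := by
  intro n
  induction n with
  | zero => omega
  | succ n ih =>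
    intro _ h1 h2
    by_cases h : t < f (n + 1)
    · rcases Nat.eq_zero_or_pos n with rfl | hn
      · exact absurd h1 (not_le.mpr h)
      · obtain ⟨i, hi, hii⟩ := ih hn h1 h
        exact ⟨i, by omega, hii⟩
    · exact ⟨n, Nat.lt_succ_self n, not_lt.mp h, h2⟩

end Aux

/-- in a Tulip design with `b ≥ 4` arcs `Φ_i = [x_i, y_i)` on the
circle `ℝ/2πℤ` (given via `2π`-periodic lifts `X Y : ℕ → ℝ` with the cyclic
ordering `x_i ≤ x_{i+1} ≤ y_i ≤ x_{i+2}`, each beam overlapping only the next),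
the component beams are exactly `ω_{i,i⊕1} = Φ_i ∩ Φ_{i⊕1} = [x_{i⊕1}, y_i)`
and `ω_{i⊕1} = Φ_{i⊕1} \ (Φ_i ∪ Φ_{i⊕2}) = [y_i, x_{i⊕2})`, and these `2b`
intervals partition the circle. -/
theorem tulip_component_beams_partition {b : ℕ} (hb : 4 ≤ b) (X Y : ℕ → ℝ)
    (hXper : ∀ i, X (i + b) = X i + 2 * π)
    (hYper : ∀ i, Y (i + b) = Y i + 2 * π)
    (hXmono : ∀ i, X i ≤ X (i + 1))
    (hover : ∀ i, X (i + 1) ≤ Y i)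
    (hnext : ∀ i, Y i ≤ X (i + 2)) :
    (∀ i, ((fun t : ℝ => (t : AddCircle (2 * π))) '' Set.Ico (X i) (Y i)) ∩
            ((fun t : ℝ => (t : AddCircle (2 * π))) '' Set.Ico (X (i + 1)) (Y (i + 1)))
          = (fun t : ℝ => (t : AddCircle (2 * π))) '' Set.Ico (X (i + 1)) (Y i)) ∧
    (∀ i, ((fun t : ℝ => (t : AddCircle (2 * π))) '' Set.Ico (X (i + 1)) (Y (i + 1))) \
            (((fun t : ℝ => (t : AddCircle (2 * π))) '' Set.Ico (X i) (Y i)) ∪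
              ((fun t : ℝ => (t : AddCircle (2 * π))) '' Set.Ico (X (i + 2)) (Y (i + 2))))
          = (fun t : ℝ => (t : AddCircle (2 * π))) '' Set.Ico (Y i) (X (i + 2))) ∧
    ((⋃ i ∈ Finset.range b,
        (fun t : ℝ => (t : AddCircle (2 * π))) '' Set.Ico (X (i + 1)) (Y i)) ∪
      (⋃ i ∈ Finset.range b,
        (fun t : ℝ => (t : AddCircle (2 * π))) '' Set.Ico (Y i) (X (i + 2)))
        = Set.univ) ∧
    (∀ i ∈ Finset.range b, ∀ j ∈ Finset.range b, i ≠ j →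
        Disjoint ((fun t : ℝ => (t : AddCircle (2 * π))) '' Set.Ico (X (i + 1)) (Y i))
                 ((fun t : ℝ => (t : AddCircle (2 * π))) '' Set.Ico (X (j + 1)) (Y j)) ∧
        Disjoint ((fun t : ℝ => (t : AddCircle (2 * π))) '' Set.Ico (Y i) (X (i + 2)))
                 ((fun t : ℝ => (t : AddCircle (2 * π))) '' Set.Ico (Y j) (X (j + 2)))) ∧
    (∀ i ∈ Finset.range b, ∀ j ∈ Finset.range b,
        Disjoint ((fun t : ℝ => (t : AddCircle (2 * π))) '' Set.Ico (Y i) (X (i + 2)))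
                 ((fun t : ℝ => (t : AddCircle (2 * π))) '' Set.Ico (X (j + 1)) (Y j))) := by
  haveI : Fact (0 < 2 * π) := ⟨by positivity⟩
  have hXm : Monotone X := monotone_nat_of_le_succ hXmono
  have hYm : Monotone Y := monotone_nat_of_le_succ fun i => (hnext i).trans (hover (i + 1))
  -- Y i ≤ X j when i + 2 ≤ j
  have hYX : ∀ i j, i + 2 ≤ j → Y i ≤ X j := fun i j h => (hnext i).trans (hXm h)
  -- X j ≤ Y i when j ≤ i + 1
  have hXY : ∀ i j, j ≤ i + 1 → X j ≤ Y i := fun i j h => (hXm h).trans (hover i)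
  -- the big window subset facts
  have hwin1 : X (b + 1) = X 1 + 2 * π := by
    rw [show b + 1 = 1 + b by omega]
    exact hXper 1
  have hAsub : ∀ i < b, Set.Ico (X (i + 1)) (Y i) ⊆ Set.Ico (X 1) (X 1 + 2 * π) := by
    intro i hi
    rw [← hwin1]
    exact Set.Ico_subset_Ico (hXm (by omega)) (hYX i (b + 1) (by omega))
  have hBsub : ∀ i < b, Set.Ico (Y i) (X (i + 2)) ⊆ Set.Ico (X 1) (X 1 + 2 * π) := by
    intro i hi
    rw [← hwin1]
    exact Set.Ico_subset_Ico ((hXm (by omega : 1 ≤ i + 1)).trans (hover i)) (hXm (by omega))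
  refine ⟨?_, ?_, ?_, ?_, ?_⟩
  · -- part 1
    intro i
    have hw : X i + 2 * π = X (i + b) := (hXper i).symm
    have h1 : Set.Ico (X i) (Y i) ⊆ Set.Ico (X i) (X i + 2 * π) := by
      rw [hw]; exact Set.Ico_subset_Ico le_rfl (hYX i (i + b) (by omega))
    have h2 : Set.Ico (X (i + 1)) (Y (i + 1)) ⊆ Set.Ico (X i) (X i + 2 * π) := by
      rw [hw]; exact Set.Ico_subset_Ico (hXmono i) (hYX (i + 1) (i + b) (by omega))
    have hset : Set.Ico (X i) (Y i) ∩ Set.Ico (X (i + 1)) (Y (i + 1))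
        = Set.Ico (X (i + 1)) (Y i) := by
      ext t
      simp only [Set.mem_inter_iff, Set.mem_Ico]
      have := hXmono i
      have := hnext i
      have := hover (i + 1)
      constructor
      · rintro ⟨⟨_, ha⟩, ⟨hc, _⟩⟩; exact ⟨hc, ha⟩
      · rintro ⟨ha, hc⟩; exact ⟨⟨by linarith, hc⟩, ⟨ha, by linarith⟩⟩
    rw [tulip_img_inter h1 h2, hset]
  · -- part 2
    intro i
    have hw : X i + 2 * π = X (i + b) := (hXper i).symm
    have h1 : Set.Ico (X (i + 1)) (Y (i + 1)) ⊆ Set.Ico (X i) (X i + 2 * π) := by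
      rw [hw]; exact Set.Ico_subset_Ico (hXmono i) (hYX (i + 1) (i + b) (by omega))
    have h2 : Set.Ico (X i) (Y i) ⊆ Set.Ico (X i) (X i + 2 * π) := by
      rw [hw]; exact Set.Ico_subset_Ico le_rfl (hYX i (i + b) (by omega))
    have h3 : Set.Ico (X (i + 2)) (Y (i + 2)) ⊆ Set.Ico (X i) (X i + 2 * π) := by
      rw [hw]; exact Set.Ico_subset_Ico (hXm (by omega)) (hYX (i + 2) (i + b) (by omega))
    have hset : Set.Ico (X (i + 1)) (Y (i + 1)) \
        (Set.Ico (X i) (Y i) ∪ Set.Ico (X (i + 2)) (Y (i + 2)))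
        = Set.Ico (Y i) (X (i + 2)) := by
      ext t
      simp only [Set.mem_diff, Set.mem_union, Set.mem_Ico, not_or, not_and, not_lt]
      have e1 := hXmono i
      have e2 := hover i
      have e3 := hnext i
      have e4 := hover (i + 1)
      have e5 := hnext (i + 1)
      have e6 := hover (i + 2)
      constructor
      · rintro ⟨⟨ht1, ht2⟩, hn1, hn2⟩
        refine ⟨hn1 (by linarith), ?_⟩
        by_contra h
        push_neg at h
        have := hn2 h
        linarith
      · rintro ⟨ht1, ht2⟩
        exact ⟨⟨by linarith, by linarith⟩, fun _ => ht1, fun h => by linarith⟩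
    rw [tulip_img_diff h1 h2 h3, hset]
  · -- part 3: cover
    apply Set.eq_univ_of_univ_subset
    have : ((fun t : ℝ => (t : AddCircle (2 * π))) '' Set.Ico (X 1) (X 1 + 2 * π))
        = Set.univ := AddCircle.coe_image_Ico_eq (2 * π) (X 1)
    rw [← this]
    rintro x ⟨t, ht, rfl⟩
    have h1 : X 1 ≤ t := ht.1
    have h2 : t < X (b + 1) := by rw [hwin1]; exact ht.2
    obtain ⟨i, hi, hil, hir⟩ := tulip_find X t b (by omega) h1 h2
    by_cases h : t < Y i
    · apply Set.mem_union_left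
      simp only [Set.mem_iUnion]
      exact ⟨i, Finset.mem_range.mpr hi, t, ⟨hil, h⟩, rfl⟩
    · apply Set.mem_union_right
      simp only [Set.mem_iUnion]
      exact ⟨i, Finset.mem_range.mpr hi, t, ⟨not_lt.mp h, hir⟩, rfl⟩
  · -- part 4
    intro i hi j hj hij
    rw [Finset.mem_range] at hi hj
    constructor
    · rcases lt_or_gt_of_ne hij with h | h
      · exact tulip_img_disjoint (hAsub i hi) (hAsub j hj)
          (tulip_disj_Ico ((hnext i).trans (hXm (by omega))))
      · exact (tulip_img_disjoint (hAsub j hj) (hAsub i hi)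
          (tulip_disj_Ico ((hnext j).trans (hXm (by omega))))).symm
    · rcases lt_or_gt_of_ne hij with h | h
      · exact tulip_img_disjoint (hBsub i hi) (hBsub j hj)
          (tulip_disj_Ico ((hXm (by omega : i + 2 ≤ j + 1)).trans (hover j)))
      · exact (tulip_img_disjoint (hBsub j hj) (hBsub i hi)
          (tulip_disj_Ico ((hXm (by omega : j + 2 ≤ i + 1)).trans (hover i)))).symm
  · -- part 5
    intro i hi j hj
    rw [Finset.mem_range] at hi hj
    rcases le_or_gt j i with h | h
    · exact (tulip_img_disjoint (hAsub j hj) (hBsub i hi)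
        (tulip_disj_Ico (hYm h))).symm
    · exact tulip_img_disjoint (hBsub i hi) (hAsub j hj)
        (tulip_disj_Ico (hXm (by omega)))
end
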